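/- Let a, b ∈ [0,1]. Define f(a,b) = (1-a)(1-b) + a(1-a)(1-b)^2 + a^2(1-a)(1-b)^3. Then f is nonincreasing in a: if 0 ≤ a ≤ a' ≤ 1 then f(a',b) ≤ f(a,b). -/
import Mathlib

noncomputable def f (a b : ℝ) : ℝ :=
  (1 - a) * (1 - b) + a * (1 - a) * (1 - b)^2 + a^2 * (1 - a) * (1 - b)^3

theorem stmt_11 (a a' b : ℝ) (hb0 : 0 ≤ b) (hb1 : b ≤ 1)
    (ha0 : 0 ≤ a) (haa : a ≤ a') (ha1 : a' ≤ 1) :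
    f a' b ≤ f a b := by
  unfold f
  have ht : (0:ℝ) ≤ 1 - b := by linarith
  have hd : (0:ℝ) ≤ a' - a := by linarith
  have ha'0 : (0:ℝ) ≤ a' := ha0.trans haa
  have h1 : 0 ≤ (1 - b) * (a' - a) * b := by positivity
  have h2 : 0 ≤ (1 - b)^2 * (a' - a) * (b * (a + a')) := by
    have : 0 ≤ a + a' := by linarith
    positivity
  have h3 : 0 ≤ (1 - b)^3 * (a' - a) * (a^2 + a*a' + a'^2) := by
    have : 0 ≤ a^2 + a*a' + a'^2 := by positivity
    positivity
  nlinarith [h1, h2, h3]
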